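/- Let g be the 6-dimensional nilpotent real Lie algebra with basis e_1,…,e_6 and nonzero brackets [e_1,e_2] = −e_4, [e_1,e_3] = −e_5, [e_1,e_4] = −e_5, [e_2,e_4] = −e_6, and let K be the endomorphism equal to +id on g⁺ := span(e_1, e_3, e_5) and −id on g⁻ := span(e_2, e_4, e_6). Then: (i) g = g⁺ ⊕ g⁻ is a (non-Abelian) linear D-complex structure; (ii) the 2-form ω := e^1∧e^6 + e^2∧e^5 + e^3∧e^4 is d-closed, nondegenerate and K-anti-invariant (a linear D-Kähler structure); (iii) K is not linear C∞-pure at the 2nd stage: the forms e^1∧e^3 (K-invariant) and −e^1∧e^4 (K-anti-invariant) are both d-closed, differ by the exact form d(e^5), and define the same nonzero class, so 0 ≠ [e^1∧e^3] ∈ H^{2+}_K(g;ℝ) ∩ H^{2−}_K(g;ℝ). -/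

import Mathlib

open scoped BigOperators

noncomputable section ChevalleyEilenberg

variable (g : Type*) [LieRing g] [LieAlgebra ℝ g]

/-- The Chevalley–Eilenberg differential of an alternating `k`-form on a real Lie
algebra, as a function on `(k+1)`-tuples:
`(dα)(x_0,…,x_k) = Σ_{i<j} (−1)^{i+j} α([x_i,x_j], x_0,…,x̂_i,…,x̂_j,…,x_k)`. -/
def ceD : {k : ℕ} → AlternatingMap ℝ g ℝ (Fin k) → ((Fin (k + 1) → g) → ℝ)
  | 0, _ => 0
  | (k + 1), α => fun x =>
      ∑ i : Fin (k + 2), ∑ j : Fin (k + 2),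
        if hij : (i : ℕ) < (j : ℕ) then
          (-1 : ℝ) ^ ((i : ℕ) + (j : ℕ)) *
            α (fun m : Fin (k + 1) =>
                if hm : (m : ℕ) = 0 then ⁅x i, x j⁆
                else
                  x (j.succAbove
                      ((⟨(i : ℕ), by omega⟩ : Fin (k + 1)).succAbove
                        (⟨(m : ℕ) - 1, by omega⟩ : Fin k))))
        else 0

theorem ceD_zero {k : ℕ} : ceD g (0 : AlternatingMap ℝ g ℝ (Fin k)) = 0 := by
  cases k with
  | zero => rfl
  | succ k => funext x; simp [ceD]

theorem ceD_add {k : ℕ} (α β : AlternatingMap ℝ g ℝ (Fin k)) :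
    ceD g (α + β) = ceD g α + ceD g β := by
  cases k with
  | zero => funext x; simp [ceD]
  | succ k =>
    funext x
    simp only [ceD, Pi.add_apply, AlternatingMap.add_apply]
    rw [← Finset.sum_add_distrib]
    refine Finset.sum_congr rfl fun i _ => ?_
    rw [← Finset.sum_add_distrib]
    refine Finset.sum_congr rfl fun j _ => ?_
    split
    · ring
    · ring

theorem ceD_smul {k : ℕ} (c : ℝ) (α : AlternatingMap ℝ g ℝ (Fin k)) :
    ceD g (c • α) = c • ceD g α := by
  cases k with
  | zero => funext x; simp [ceD]
  | succ k =>
    funext x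
    simp only [ceD, Pi.smul_apply, AlternatingMap.smul_apply, smul_eq_mul,
      Finset.mul_sum]
    refine Finset.sum_congr rfl fun i _ => ?_
    refine Finset.sum_congr rfl fun j _ => ?_
    split
    · ring
    · ring

/-- The space of `d`-closed `k`-forms. -/
def Zsub (k : ℕ) : Submodule ℝ (AlternatingMap ℝ g ℝ (Fin k)) where
  carrier := {α | ceD g α = 0}
  add_mem' := by
    intro a b ha hb
    simp only [Set.mem_setOf_eq] at *
    rw [ceD_add, ha, hb, add_zero]
  zero_mem' := by
    simpa only [Set.mem_setOf_eq] using ceD_zero g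
  smul_mem' := by
    intro c a ha
    simp only [Set.mem_setOf_eq] at *
    rw [ceD_smul, ha, smul_zero]

/-- The space of `d`-exact `k`-forms. -/
def Bsub : (k : ℕ) → Submodule ℝ (AlternatingMap ℝ g ℝ (Fin k))
  | 0 => ⊥
  | (k + 1) =>
    { carrier := {α | ∃ β : AlternatingMap ℝ g ℝ (Fin k), ceD g β = ⇑α}
      add_mem' := by
        rintro a b ⟨βa, hβa⟩ ⟨βb, hβb⟩
        exact ⟨βa + βb, by rw [ceD_add, hβa, hβb]; ext x; simp⟩
      zero_mem' := ⟨0, by rw [ceD_zero]; ext x; simp⟩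
      smul_mem' := by
        rintro c a ⟨β, hβ⟩
        exact ⟨c • β, by rw [ceD_smul, hβ]; rfl⟩ }

/-- The `k`-th Lie algebra cohomology `H^k(g;ℝ) = ker d / im d`. -/
abbrev Hcoh (k : ℕ) : Type _ :=
  @HasQuotient.Quotient ↥(Zsub g k) _ Submodule.hasQuotient ((Bsub g k).comap (Zsub g k).subtype)

/-- The cohomology class of a `d`-closed `k`-form. -/
def cls {k : ℕ} (α : AlternatingMap ℝ g ℝ (Fin k)) (hα : ceD g α = 0) : Hcoh g k :=
  Submodule.Quotient.mk (⟨α, hα⟩ : Zsub g k)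

/-- The subgroup `H^{k+}_K(g;ℝ)` of classes admitting a `d`-closed `K`-invariant
representative.  (The set of such classes is a linear subspace, so taking its span
does not enlarge it.) -/
def Hplus (K : g →ₗ[ℝ] g) (k : ℕ) : Submodule ℝ (Hcoh g k) :=
  Submodule.span ℝ
    {c | ∃ (α : AlternatingMap ℝ g ℝ (Fin k)) (hα : ceD g α = 0),
        α.compLinearMap K = α ∧ c = cls g α hα}

/-- The subgroup `H^{k−}_K(g;ℝ)` of classes admitting a `d`-closed
`K`-anti-invariant representative. -/
def Hminus (K : g →ₗ[ℝ] g) (k : ℕ) : Submodule ℝ (Hcoh g k) :=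
  Submodule.span ℝ
    {c | ∃ (α : AlternatingMap ℝ g ℝ (Fin k)) (hα : ceD g α = 0),
        α.compLinearMap K = -α ∧ c = cls g α hα}

/-- The wedge product of `k` linear functionals, as an alternating `k`-form. -/
def wedge {k : ℕ} (fs : Fin k → (g →ₗ[ℝ] ℝ)) :
    AlternatingMap ℝ g ℝ (Fin k) :=
  MultilinearMap.alternatization
    ((MultilinearMap.mkPiAlgebra ℝ (Fin k) ℝ).compLinearMap fs)

end ChevalleyEilenberg

section Helpers

variable (g : Type*) [LieRing g] [LieAlgebra ℝ g]

theorem wedge_one_apply (f : g →ₗ[ℝ] ℝ) (v : Fin 1 → g) :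
    wedge g ![f] v = f (v 0) := by
  have huniv : (Finset.univ : Finset (Equiv.Perm (Fin 1))) = {1} := by decide
  rw [wedge, MultilinearMap.alternatization_apply]
  rw [huniv]
  simp [MultilinearMap.domDomCongr_apply, MultilinearMap.compLinearMap_apply,
    MultilinearMap.mkPiAlgebra_apply]

theorem wedge_two_apply (f₀ f₁ : g →ₗ[ℝ] ℝ) (v : Fin 2 → g) :
    wedge g ![f₀, f₁] v = f₀ (v 0) * f₁ (v 1) - f₀ (v 1) * f₁ (v 0) := by
  have huniv : (Finset.univ : Finset (Equiv.Perm (Fin 2))) = {1, Equiv.swap 0 1} := by decide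
  rw [wedge, MultilinearMap.alternatization_apply, huniv]
  rw [Finset.sum_insert (by decide), Finset.sum_singleton]
  have hs : Equiv.Perm.sign (Equiv.swap (0 : Fin 2) 1) = -1 := by decide
  simp [hs, MultilinearMap.domDomCongr_apply, MultilinearMap.compLinearMap_apply,
    MultilinearMap.mkPiAlgebra_apply, Fin.prod_univ_two, Equiv.swap_apply_left,
    Equiv.swap_apply_right]
  ring

end Helpers

section Helpers2

variable (g : Type*) [LieRing g] [LieAlgebra ℝ g]

theorem ceD_one_apply (β : AlternatingMap ℝ g ℝ (Fin 1)) (x : Fin 2 → g) :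
    ceD g β x = -β ![⁅x 0, x 1⁆] := by
  show (∑ i : Fin 2, ∑ j : Fin 2, _) = _
  rw [Fin.sum_univ_two, Fin.sum_univ_two, Fin.sum_univ_two]
  rw [dif_neg (show ¬((0:Fin 2):ℕ) < ((0:Fin 2):ℕ) by decide),
    dif_pos (show ((0:Fin 2):ℕ) < ((1:Fin 2):ℕ) by decide),
    dif_neg (show ¬((1:Fin 2):ℕ) < ((0:Fin 2):ℕ) by decide),
    dif_neg (show ¬((1:Fin 2):ℕ) < ((1:Fin 2):ℕ) by decide)]
  have h01 : (fun m : Fin 1 => if hm : (m : ℕ) = 0 then ⁅x 0, x 1⁆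
      else x ((1 : Fin 2).succAbove ((⟨((0:Fin 2) : ℕ), by omega⟩ : Fin 1).succAbove
        (⟨(m : ℕ) - 1, by omega⟩ : Fin 0)))) = ![⁅x 0, x 1⁆] := by
    funext m; fin_cases m <;> rfl
  rw [h01]
  norm_num

theorem ceD_two_apply (α : AlternatingMap ℝ g ℝ (Fin 2)) (x : Fin 3 → g) :
    ceD g α x = -α ![⁅x 0, x 1⁆, x 2] + α ![⁅x 0, x 2⁆, x 1] - α ![⁅x 1, x 2⁆, x 0] := by
  show (∑ i : Fin 3, ∑ j : Fin 3, _) = _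
  rw [Fin.sum_univ_three, Fin.sum_univ_three, Fin.sum_univ_three, Fin.sum_univ_three]
  rw [dif_neg (show ¬((0:Fin 3):ℕ) < ((0:Fin 3):ℕ) by decide),
    dif_pos (show ((0:Fin 3):ℕ) < ((1:Fin 3):ℕ) by decide),
    dif_pos (show ((0:Fin 3):ℕ) < ((2:Fin 3):ℕ) by decide),
    dif_neg (show ¬((1:Fin 3):ℕ) < ((0:Fin 3):ℕ) by decide),
    dif_neg (show ¬((1:Fin 3):ℕ) < ((1:Fin 3):ℕ) by decide),
    dif_pos (show ((1:Fin 3):ℕ) < ((2:Fin 3):ℕ) by decide),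
    dif_neg (show ¬((2:Fin 3):ℕ) < ((0:Fin 3):ℕ) by decide),
    dif_neg (show ¬((2:Fin 3):ℕ) < ((1:Fin 3):ℕ) by decide),
    dif_neg (show ¬((2:Fin 3):ℕ) < ((2:Fin 3):ℕ) by decide)]
  have h01 : (fun m : Fin 2 => if hm : (m : ℕ) = 0 then ⁅x 0, x 1⁆
      else x ((1 : Fin 3).succAbove ((⟨((0:Fin 3) : ℕ), by omega⟩ : Fin 2).succAbove
        (⟨(m : ℕ) - 1, by omega⟩ : Fin 1)))) = ![⁅x 0, x 1⁆, x 2] := by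
    funext m; fin_cases m <;> rfl
  have h02 : (fun m : Fin 2 => if hm : (m : ℕ) = 0 then ⁅x 0, x 2⁆
      else x ((2 : Fin 3).succAbove ((⟨((0:Fin 3) : ℕ), by omega⟩ : Fin 2).succAbove
        (⟨(m : ℕ) - 1, by omega⟩ : Fin 1)))) = ![⁅x 0, x 2⁆, x 1] := by
    funext m; fin_cases m <;> rfl
  have h12 : (fun m : Fin 2 => if hm : (m : ℕ) = 0 then ⁅x 1, x 2⁆
      else x ((2 : Fin 3).succAbove ((⟨((1:Fin 3) : ℕ), by omega⟩ : Fin 2).succAbove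
        (⟨(m : ℕ) - 1, by omega⟩ : Fin 1)))) = ![⁅x 1, x 2⁆, x 0] := by
    funext m; fin_cases m <;> rfl
  rw [h01, h02, h12]
  norm_num
  ring

end Helpers2

section Helpers3

variable (g : Type*) [LieRing g] [LieAlgebra ℝ g] (e : Module.Basis (Fin 6) ℝ g)

theorem brkt_table
    (hbr : ∀ i j : Fin 6, i < j → ⁅e i, e j⁆ =
      (if i = 0 ∧ j = 1 then -e 3 else if i = 0 ∧ j = 2 then -e 4
        else if i = 0 ∧ j = 3 then -e 4 else if i = 1 ∧ j = 3 then -e 5 else 0)) :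
    ∀ i j : Fin 6, ⁅e i, e j⁆ =
      (if i = 0 ∧ j = 1 then -e 3 else if i = 1 ∧ j = 0 then e 3
        else if i = 0 ∧ j = 2 then -e 4 else if i = 2 ∧ j = 0 then e 4
        else if i = 0 ∧ j = 3 then -e 4 else if i = 3 ∧ j = 0 then e 4
        else if i = 1 ∧ j = 3 then -e 5 else if i = 3 ∧ j = 1 then e 5 else 0) := by
  intro i j
  rcases lt_trichotomy i j with h | h | h
  · rw [hbr i j h]
    fin_cases i <;> fin_cases j <;> simp_all <;> omega
  · subst h
    simp only [lie_self]
    fin_cases i <;> simp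
  · rw [← lie_skew, hbr j i h]
    fin_cases i <;> fin_cases j <;> simp_all <;> omega

theorem lie_eq (hbr' : ∀ i j : Fin 6, ⁅e i, e j⁆ =
      (if i = 0 ∧ j = 1 then -e 3 else if i = 1 ∧ j = 0 then e 3
        else if i = 0 ∧ j = 2 then -e 4 else if i = 2 ∧ j = 0 then e 4
        else if i = 0 ∧ j = 3 then -e 4 else if i = 3 ∧ j = 0 then e 4
        else if i = 1 ∧ j = 3 then -e 5 else if i = 3 ∧ j = 1 then e 5 else 0))
    (x y : g) :
    ⁅x, y⁆ = (e.repr x 1 * e.repr y 0 - e.repr x 0 * e.repr y 1) • e 3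
      + ((e.repr x 2 + e.repr x 3) * e.repr y 0
          - e.repr x 0 * (e.repr y 2 + e.repr y 3)) • e 4
      + (e.repr x 3 * e.repr y 1 - e.repr x 1 * e.repr y 3) • e 5 := by
  have hsl : ∀ (f : Fin 6 → g) (y : g), ⁅∑ i : Fin 6, f i, y⁆ = ∑ i : Fin 6, ⁅f i, y⁆ := by
    intro f y
    simp [Fin.sum_univ_six, add_lie]
  have hls : ∀ (x : g) (f : Fin 6 → g), ⁅x, ∑ i : Fin 6, f i⁆ = ∑ i : Fin 6, ⁅x, f i⁆ := by
    intro x f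
    simp [Fin.sum_univ_six, lie_add]
  have hx : ⁅x, y⁆ = ∑ i : Fin 6, ∑ j : Fin 6, (e.repr x i * e.repr y j) • ⁅e i, e j⁆ := by
    conv_lhs => rw [← e.sum_repr x, ← e.sum_repr y]
    rw [hsl]
    refine Finset.sum_congr rfl fun i _ => ?_
    rw [smul_lie, hls, Finset.smul_sum]
    refine Finset.sum_congr rfl fun j _ => ?_
    rw [lie_smul, smul_smul]
  rw [hx]
  simp only [Fin.sum_univ_six]
  simp only [hbr']
  simp only [Fin.reduceEq, reduceIte, Fin.isValue, if_true, if_false, and_true, and_false, true_and, false_and, and_self]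
  module

end Helpers3

section Helpers4

variable (g : Type*) [LieRing g] [LieAlgebra ℝ g] (e : Module.Basis (Fin 6) ℝ g)

theorem repr_lie (hbr' : ∀ i j : Fin 6, ⁅e i, e j⁆ =
      (if i = 0 ∧ j = 1 then -e 3 else if i = 1 ∧ j = 0 then e 3
        else if i = 0 ∧ j = 2 then -e 4 else if i = 2 ∧ j = 0 then e 4
        else if i = 0 ∧ j = 3 then -e 4 else if i = 3 ∧ j = 0 then e 4
        else if i = 1 ∧ j = 3 then -e 5 else if i = 3 ∧ j = 1 then e 5 else 0))
    (x y : g) (t : Fin 6) :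
    e.repr ⁅x, y⁆ t =
      (if t = 3 then e.repr x 1 * e.repr y 0 - e.repr x 0 * e.repr y 1
        else if t = 4 then (e.repr x 2 + e.repr x 3) * e.repr y 0
            - e.repr x 0 * (e.repr y 2 + e.repr y 3)
        else if t = 5 then e.repr x 3 * e.repr y 1 - e.repr x 1 * e.repr y 3
        else 0) := by
  rw [lie_eq g e hbr' x y]
  simp only [map_add, map_smul, e.repr_self, Finsupp.coe_add, Finsupp.coe_smul,
    Pi.add_apply, Pi.smul_apply, smul_eq_mul]
  fin_cases t <;> simp [Finsupp.single_apply]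

theorem K_repr (K : g →ₗ[ℝ] g)
    (h0 : K (e 0) = e 0) (h2 : K (e 2) = e 2) (h4 : K (e 4) = e 4)
    (h1 : K (e 1) = -e 1) (h3 : K (e 3) = -e 3) (h5 : K (e 5) = -e 5) (x : g) (t : Fin 6) :
    e.repr (K x) t = (if t = 0 ∨ t = 2 ∨ t = 4 then e.repr x t else -(e.repr x t)) := by
  have hx : K x = ∑ i : Fin 6, e.repr x i • K (e i) := by
    conv_lhs => rw [← e.sum_repr x]
    rw [map_sum]
    simp [map_smul]
  rw [hx, Fin.sum_univ_six, h0, h1, h2, h3, h4, h5]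
  simp only [smul_neg, map_add, map_neg, map_smul, e.repr_self, Finsupp.coe_add,
    Finsupp.coe_neg, Finsupp.coe_smul, Pi.add_apply, Pi.neg_apply, Pi.smul_apply, smul_eq_mul]
  fin_cases t <;> simp [Finsupp.single_apply]

theorem span_lie_closed (s : Set g)
    (h : ∀ x ∈ s, ∀ y ∈ s, ⁅x, y⁆ ∈ Submodule.span ℝ s) :
    ∀ x ∈ Submodule.span ℝ s, ∀ y ∈ Submodule.span ℝ s, ⁅x, y⁆ ∈ Submodule.span ℝ s := by
  intro x hx y hy
  induction hx using Submodule.span_induction with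
  | mem a ha =>
    induction hy using Submodule.span_induction with
    | mem b hb => exact h a ha b hb
    | zero => simp
    | add u v hu hv ihu ihv => rw [lie_add]; exact add_mem ihu ihv
    | smul c u hu ihu => rw [lie_smul]; exact Submodule.smul_mem _ _ ihu
  | zero => simp
  | add u v hu hv ihu ihv => rw [add_lie]; exact add_mem ihu ihv
  | smul c u hu ihu => rw [smul_lie]; exact Submodule.smul_mem _ _ ihu

end Helpers4
noncomputable section

section Stmt10

variable (g : Type*) [LieRing g] [LieAlgebra ℝ g] (e : Module.Basis (Fin 6) ℝ g)

/-- `g⁺ = span(e_1, e_3, e_5)` (0-indexed: `e 0, e 2, e 4`). -/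
def gP : Submodule ℝ g := Submodule.span ℝ {e 0, e 2, e 4}

/-- `g⁻ = span(e_2, e_4, e_6)` (0-indexed: `e 1, e 3, e 5`). -/
def gM : Submodule ℝ g := Submodule.span ℝ {e 1, e 3, e 5}

/-- `ω = e^1∧e^6 + e^2∧e^5 + e^3∧e^4`. -/
def omegaF : AlternatingMap ℝ g ℝ (Fin 2) :=
  wedge g ![e.coord 0, e.coord 5] + wedge g ![e.coord 1, e.coord 4] +
    wedge g ![e.coord 2, e.coord 3]

/-- `e^1∧e^3`. -/
def a13 : AlternatingMap ℝ g ℝ (Fin 2) := wedge g ![e.coord 0, e.coord 2]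

/-- `e^1∧e^4`. -/
def a14 : AlternatingMap ℝ g ℝ (Fin 2) := wedge g ![e.coord 0, e.coord 3]

/-- On the 6-dimensional nilpotent Lie algebra with
`[e_1,e_2] = −e_4`, `[e_1,e_3] = −e_5`, `[e_1,e_4] = −e_5`, `[e_2,e_4] = −e_6`,
the (non-Abelian) D-complex structure with `g⁺ = span(e_1,e_3,e_5)`,
`g⁻ = span(e_2,e_4,e_6)` admits the linear D-Kähler form
`ω = e^1∧e^6 + e^2∧e^5 + e^3∧e^4` but is not linear C∞-pure at the 2nd stage:
`0 ≠ [e^1∧e^3] ∈ H^{2+}_K ∩ H^{2−}_K`. -/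
theorem six_dim_DKahler_not_pure
    (hbr : ∀ i j : Fin 6, i < j → ⁅e i, e j⁆ =
      (if i = 0 ∧ j = 1 then -e 3 else if i = 0 ∧ j = 2 then -e 4
        else if i = 0 ∧ j = 3 then -e 4 else if i = 1 ∧ j = 3 then -e 5 else 0))
    (K : g →ₗ[ℝ] g)
    (hKp : ∀ x ∈ gP g e, K x = x) (hKq : ∀ x ∈ gM g e, K x = -x) :
    IsCompl (gP g e) (gM g e) ∧
    (∀ x ∈ gP g e, ∀ y ∈ gP g e, ⁅x, y⁆ ∈ gP g e) ∧
    (∀ x ∈ gM g e, ∀ y ∈ gM g e, ⁅x, y⁆ ∈ gM g e) ∧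
    ¬ ((∀ x ∈ gP g e, ∀ y ∈ gP g e, ⁅x, y⁆ = (0 : g)) ∧
       (∀ x ∈ gM g e, ∀ y ∈ gM g e, ⁅x, y⁆ = (0 : g))) ∧
    ceD g (omegaF g e) = 0 ∧
    (∀ x : g, (∀ y : g, omegaF g e ![x, y] = 0) → x = 0) ∧
    (omegaF g e).compLinearMap K = -(omegaF g e) ∧
    (a13 g e).compLinearMap K = a13 g e ∧
    (a14 g e).compLinearMap K = -(a14 g e) ∧
    ceD g (wedge g ![e.coord 4]) = ⇑(a13 g e + a14 g e) ∧
    (∃ (h1 : ceD g (a13 g e) = 0) (h2 : ceD g (-(a14 g e)) = 0),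
      cls g (a13 g e) h1 = cls g (-(a14 g e)) h2 ∧
      cls g (a13 g e) h1 ≠ 0 ∧
      cls g (a13 g e) h1 ∈ Hplus g K 2 ⊓ Hminus g K 2) := by
  have hbr' := brkt_table g e hbr
  have hrepr := repr_lie g e hbr'
  have hK0 : K (e 0) = e 0 := hKp _ (by unfold gP; exact Submodule.subset_span (by simp))
  have hK2 : K (e 2) = e 2 := hKp _ (by unfold gP; exact Submodule.subset_span (by simp))
  have hK4 : K (e 4) = e 4 := hKp _ (by unfold gP; exact Submodule.subset_span (by simp))
  have hK1 : K (e 1) = -e 1 := hKq _ (by unfold gM; exact Submodule.subset_span (by simp))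
  have hK3 : K (e 3) = -e 3 := hKq _ (by unfold gM; exact Submodule.subset_span (by simp))
  have hK5 : K (e 5) = -e 5 := hKq _ (by unfold gM; exact Submodule.subset_span (by simp))
  have hKr := K_repr g e K hK0 hK2 hK4 hK1 hK3 hK5
  -- IsCompl
  have hPeq : gP g e = Submodule.span ℝ (e '' {0, 2, 4}) := by
    rw [Set.image_insert_eq, Set.image_insert_eq, Set.image_singleton]; rfl
  have hMeq : gM g e = Submodule.span ℝ (e '' {1, 3, 5}) := by
    rw [Set.image_insert_eq, Set.image_insert_eq, Set.image_singleton]; rfl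
  have hdisj : Disjoint (gP g e) (gM g e) := by
    rw [hPeq, hMeq]
    refine e.linearIndependent.disjoint_span_image ?_
    rw [Set.disjoint_left]
    rintro a (rfl | rfl | rfl) hb <;> simp at hb
  have hcodis : Codisjoint (gP g e) (gM g e) := by
    rw [codisjoint_iff, hPeq, hMeq, ← Submodule.span_union, ← Set.image_union]
    have huniv : ({0, 2, 4} : Set (Fin 6)) ∪ {1, 3, 5} = Set.univ := by
      ext a
      simp only [Set.mem_union, Set.mem_insert_iff, Set.mem_singleton_iff, Set.mem_univ,
        iff_true]
      fin_cases a <;> simp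
    rw [huniv, Set.image_univ, e.span_eq]
  -- subalgebras
  have hsubP : ∀ x ∈ gP g e, ∀ y ∈ gP g e, ⁅x, y⁆ ∈ gP g e := by
    unfold gP
    refine span_lie_closed g _ ?_
    rintro x (rfl | rfl | rfl) y (rfl | rfl | rfl) <;>
      rw [hbr' _ _] <;>
      simp only [Fin.reduceEq, and_true, and_false, true_and, false_and, and_self,
        if_true, if_false] <;>
      first
        | exact Submodule.zero_mem _
        | exact neg_mem (Submodule.subset_span (by simp))
        | exact Submodule.subset_span (by simp)
  have hsubM : ∀ x ∈ gM g e, ∀ y ∈ gM g e, ⁅x, y⁆ ∈ gM g e := by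
    unfold gM
    refine span_lie_closed g _ ?_
    rintro x (rfl | rfl | rfl) y (rfl | rfl | rfl) <;>
      rw [hbr' _ _] <;>
      simp only [Fin.reduceEq, and_true, and_false, true_and, false_and, and_self,
        if_true, if_false] <;>
      first
        | exact Submodule.zero_mem _
        | exact neg_mem (Submodule.subset_span (by simp))
        | exact Submodule.subset_span (by simp)
  -- non-abelian
  have hb02 : ⁅e 0, e 2⁆ = -e 4 := by rw [hbr']; simp
  have hb03 : ⁅e 0, e 3⁆ = -e 4 := by rw [hbr']; simp
  have hnonab : ¬ ((∀ x ∈ gP g e, ∀ y ∈ gP g e, ⁅x, y⁆ = (0 : g)) ∧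
      (∀ x ∈ gM g e, ∀ y ∈ gM g e, ⁅x, y⁆ = (0 : g))) := by
    rintro ⟨hP, -⟩
    have hm0 : e 0 ∈ gP g e := by unfold gP; exact Submodule.subset_span (by simp)
    have hm2 : e 2 ∈ gP g e := by unfold gP; exact Submodule.subset_span (by simp)
    have := hP (e 0) hm0 (e 2) hm2
    rw [hb02] at this
    exact e.ne_zero 4 (by rw [← neg_neg (e 4), this, neg_zero])
  -- closedness of omega
  have hclosed : ceD g (omegaF g e) = 0 := by
    funext x
    rw [ceD_two_apply]
    simp only [omegaF, AlternatingMap.add_apply, wedge_two_apply, Matrix.cons_val_zero,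
      Matrix.cons_val_one, Matrix.head_cons, Module.Basis.coord_apply, hrepr, Pi.zero_apply,
      Fin.reduceEq, if_true, if_false, reduceIte]
    ring
  -- nondegeneracy
  have hnondeg : ∀ x : g, (∀ y : g, omegaF g e ![x, y] = 0) → x = 0 := by
    intro x hx
    refine (Module.Basis.forall_coord_eq_zero_iff e).1 ?_
    have h5 := hx (e 5); have h4 := hx (e 4); have h3 := hx (e 3)
    have h2 := hx (e 2); have h1 := hx (e 1); have h0 := hx (e 0)
    simp only [omegaF, AlternatingMap.add_apply, wedge_two_apply, Matrix.cons_val_zero,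
      Matrix.cons_val_one, Matrix.head_cons, Module.Basis.coord_apply, Module.Basis.repr_self,
      Finsupp.single_apply, Fin.reduceEq, if_true, if_false, reduceIte, mul_one, mul_zero,
      zero_mul, one_mul, sub_zero, zero_sub, add_zero, zero_add] at h0 h1 h2 h3 h4 h5
    intro t
    fin_cases t <;> simp only [Module.Basis.coord_apply] <;>
      first
        | exact h5 | exact h4 | exact h3
        | exact neg_eq_zero.mp h2 | exact neg_eq_zero.mp h1 | exact neg_eq_zero.mp h0
  -- K anti-invariance of omega
  have hanti : (omegaF g e).compLinearMap K = -(omegaF g e) := by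
    ext v
    simp only [AlternatingMap.compLinearMap_apply, AlternatingMap.neg_apply, omegaF,
      AlternatingMap.add_apply, wedge_two_apply, Module.Basis.coord_apply, Function.comp_apply,
      Matrix.cons_val_zero, Matrix.cons_val_one, Matrix.head_cons, hKr, Fin.reduceEq,
      or_true, true_or, or_false, false_or, or_self, if_true, if_false, reduceIte]
    ring
  have hinv13 : (a13 g e).compLinearMap K = a13 g e := by
    ext v
    simp only [AlternatingMap.compLinearMap_apply, a13, wedge_two_apply,
      Module.Basis.coord_apply, Function.comp_apply, Matrix.cons_val_zero, Matrix.cons_val_one,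
      Matrix.head_cons, hKr, Fin.reduceEq, or_true, true_or, or_false, false_or, or_self,
      if_true, if_false, reduceIte]
  have hanti14 : (a14 g e).compLinearMap K = -(a14 g e) := by
    ext v
    simp only [AlternatingMap.compLinearMap_apply, AlternatingMap.neg_apply, a14,
      wedge_two_apply, Module.Basis.coord_apply, Function.comp_apply, Matrix.cons_val_zero,
      Matrix.cons_val_one, Matrix.head_cons, hKr, Fin.reduceEq, or_true, true_or, or_false,
      false_or, or_self, if_true, if_false, reduceIte]
    ring
  -- exactness identity
  have h10 : ceD g (wedge g ![e.coord 4]) = ⇑(a13 g e + a14 g e) := by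
    funext x
    rw [ceD_one_apply]
    simp only [wedge_one_apply, Matrix.cons_val_zero, Matrix.cons_val_one, Matrix.head_cons,
      Module.Basis.coord_apply, hrepr, AlternatingMap.add_apply, a13, a14, wedge_two_apply,
      Fin.reduceEq, if_true, if_false, reduceIte]
    ring
  -- closedness of a13 and -a14
  have h1 : ceD g (a13 g e) = 0 := by
    funext x
    rw [ceD_two_apply]
    simp only [a13, wedge_two_apply, Matrix.cons_val_zero, Matrix.cons_val_one,
      Matrix.head_cons, Module.Basis.coord_apply, hrepr, Pi.zero_apply, Fin.reduceEq,
      if_true, if_false, reduceIte]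
    ring
  have h2 : ceD g (-(a14 g e)) = 0 := by
    funext x
    rw [ceD_two_apply]
    simp only [AlternatingMap.neg_apply, a14, wedge_two_apply, Matrix.cons_val_zero,
      Matrix.cons_val_one, Matrix.head_cons, Module.Basis.coord_apply, hrepr, Pi.zero_apply,
      Fin.reduceEq, if_true, if_false, reduceIte]
    ring
  have hmemB : a13 g e + a14 g e ∈ Bsub g 2 := ⟨wedge g ![e.coord 4], h10⟩
  have hclseq : cls g (a13 g e) h1 = cls g (-(a14 g e)) h2 := by
    simp only [cls]
    rw [Submodule.Quotient.eq, Submodule.mem_comap]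
    simpa only [Submodule.subtype_apply, AddSubgroupClass.coe_sub, sub_neg_eq_add] using hmemB
  have hne : cls g (a13 g e) h1 ≠ 0 := by
    simp only [cls]
    rw [Ne, Submodule.Quotient.mk_eq_zero, Submodule.mem_comap]
    intro hmem
    obtain ⟨β, hβ⟩ := hmem
    simp only [Submodule.subtype_apply] at hβ
    have hA := congrFun hβ ![e 0, e 2]
    have hB := congrFun hβ ![e 0, e 3]
    rw [ceD_one_apply] at hA hB
    simp only [Matrix.cons_val_zero, Matrix.cons_val_one, Matrix.head_cons, hb02, hb03] at hA hB
    have hval2 : (a13 g e) ![e 0, e 2] = 1 := by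
      simp only [a13, wedge_two_apply, Matrix.cons_val_zero, Matrix.cons_val_one,
        Matrix.head_cons, Module.Basis.coord_apply, Module.Basis.repr_self, Finsupp.single_apply,
        Fin.reduceEq, if_true, if_false, reduceIte, mul_one, mul_zero, zero_mul, one_mul,
        sub_zero, zero_sub]
    have hval3 : (a13 g e) ![e 0, e 3] = 0 := by
      simp only [a13, wedge_two_apply, Matrix.cons_val_zero, Matrix.cons_val_one,
        Matrix.head_cons, Module.Basis.coord_apply, Module.Basis.repr_self, Finsupp.single_apply,
        Fin.reduceEq, if_true, if_false, reduceIte, mul_one, mul_zero, zero_mul, one_mul,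
        sub_zero, zero_sub]
    rw [hval2] at hA
    rw [hval3] at hB
    rw [hA] at hB
    norm_num at hB
  refine ⟨⟨hdisj, hcodis⟩, hsubP, hsubM, hnonab, hclosed, hnondeg, hanti, hinv13, hanti14,
    h10, h1, h2, hclseq, hne, ?_⟩
  refine Submodule.mem_inf.2 ⟨Submodule.subset_span ⟨a13 g e, h1, hinv13, rfl⟩, ?_⟩
  rw [hclseq]
  have hneg : (-(a14 g e)).compLinearMap K = -(-(a14 g e)) := by
    ext v
    have hv := DFunLike.congr_fun hanti14 v
    simp only [AlternatingMap.compLinearMap_apply, AlternatingMap.neg_apply] at hv ⊢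
    linarith
  exact Submodule.subset_span ⟨-(a14 g e), h2, hneg, rfl⟩

end Stmt10

end
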